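/- There is no 3×3 matrix M with non-negative integer entries satisfying M^2 = I + M. More generally, there is no n×n integer matrix M with M^2 = I + M for any odd n. -/
import Mathlib

theorem no_odd_dim_aux (n : ℕ) (hn : Odd n) :
    ¬ ∃ M : Matrix (Fin n) (Fin n) ℤ, M ^ 2 = 1 + M := by
  rintro ⟨M, hM⟩
  have hsq : (2 * M - 1) ^ 2 = (5 : ℤ) • (1 : Matrix (Fin n) (Fin n) ℤ) := by
    have h1 : (2 * M - 1) ^ 2 = 4 * M ^ 2 - 4 * M + 1 := by noncomm_ring
    rw [h1, hM, show (5:ℤ) • (1 : Matrix (Fin n) (Fin n) ℤ) = 5 from by simp]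
    noncomm_ring
    simp [nsmul_eq_mul]
  have hdet : ((2 * M - 1).det) ^ 2 = 5 ^ n := by
    have := congrArg Matrix.det hsq
    rwa [Matrix.det_pow, Matrix.det_smul, Matrix.det_one, mul_one,
      Fintype.card_fin] at this
  have hnat : ((2 * M - 1).det.natAbs) ^ 2 = 5 ^ n := by
    have := congrArg Int.natAbs hdet
    simpa [Int.natAbs_pow] using this
  have h5 : (5 : ℕ).Prime := by norm_num
  have hne : (2 * M - 1).det.natAbs ≠ 0 := by
    intro h
    rw [h] at hnat
    simp at hnat
    exact pow_ne_zero n (by norm_num : (5:ℕ) ≠ 0) hnat.symm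
  have := congrArg (fun m => m.factorization 5) hnat
  simp [Nat.factorization_pow, Nat.Prime.factorization h5, hne] at this
  obtain ⟨m, hm⟩ := hn
  omega

theorem no_odd_dim_nimrep_fib :
    (¬ ∃ M : Matrix (Fin 3) (Fin 3) ℕ, M ^ 2 = 1 + M) ∧
    (∀ n : ℕ, Odd n → ¬ ∃ M : Matrix (Fin n) (Fin n) ℤ, M ^ 2 = 1 + M) := by
  constructor
  · rintro ⟨M, hM⟩
    apply no_odd_dim_aux 3 ⟨1, rfl⟩
    refine ⟨(Int.ofNatHom.mapMatrix : Matrix (Fin 3) (Fin 3) ℕ →+* _) M, ?_⟩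
    rw [← map_pow, hM, map_add, map_one]
  · exact no_odd_dim_aux
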